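/- arXiv:2605.23092 — 2 statements merged into one kernel-verified Lean document; each statement's English description precedes it below -/
import Mathlib

section
/- Let B > 0 and a ∈ ℝ, set λ_k = (kπ/B)², σ_k = a − λ_k, and C_Γ = Γ(4/3)/Γ(2/3) (Euler Gamma function). Then there exists a constant C > 0 (depending only on a and B) such that for every integer k ≥ 1 with λ_k ≥ 2|a| and every nonzero real τ, the multiplier M(k,τ) = (iτ)^{4/3} / ((iτ)^{2/3} − C_Γ σ_k) (principal-branch powers) satisfies |M(k,τ)| ≤ C |τ|^{4/3} / (|τ|^{2/3} + k²). -/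
open Complex Real

lemma arg_I_mul_cases (τ : ℝ) (hτ : τ ≠ 0) :
    (Complex.I * (τ : ℂ)).arg = Real.pi / 2 ∨ (Complex.I * (τ : ℂ)).arg = -(Real.pi / 2) := by
  rcases hτ.lt_or_gt with h | h
  · right
    rw [Complex.arg_eq_neg_pi_div_two_iff]
    constructor <;> simp [Complex.mul_re, Complex.mul_im, h]
  · left
    rw [Complex.arg_eq_pi_div_two_iff]
    constructor <;> simp [Complex.mul_re, Complex.mul_im, h]

lemma re_den_cpow (τ : ℝ) (hτ : τ ≠ 0) :
    ((Complex.I * (τ : ℂ)) ^ ((2 : ℂ) / 3)).re = |τ| ^ ((2 : ℝ) / 3) / 2 := by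
  have hz : (Complex.I * (τ : ℂ)) ≠ 0 := by
    simp [Complex.I_ne_zero, hτ]
  have habs : ‖(Complex.I * (τ : ℂ))‖ = |τ| := by
    simp
  rw [Complex.cpow_def_of_ne_zero hz, Complex.exp_re]
  have hre : (Complex.log (Complex.I * (τ : ℂ)) * ((2 : ℂ) / 3)).re
      = Real.log |τ| * (2 / 3) := by
    simp [Complex.mul_re, Complex.log_re, habs]
  have him : (Complex.log (Complex.I * (τ : ℂ)) * ((2 : ℂ) / 3)).im
      = (Complex.I * (τ : ℂ)).arg * (2 / 3) := by
    simp [Complex.mul_im, Complex.log_im]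
  rw [hre, him]
  have hexp : rexp (Real.log |τ| * (2 / 3)) = |τ| ^ ((2 : ℝ) / 3) := by
    rw [Real.rpow_def_of_pos (abs_pos.mpr hτ)]
  have hcos : Real.cos ((Complex.I * (τ : ℂ)).arg * (2 / 3)) = 1 / 2 := by
    rcases arg_I_mul_cases τ hτ with h | h <;> rw [h]
    · rw [show Real.pi / 2 * (2 / 3) = Real.pi / 3 by ring, Real.cos_pi_div_three]
    · rw [show -(Real.pi / 2) * (2 / 3) = -(Real.pi / 3) by ring, Real.cos_neg,
        Real.cos_pi_div_three]
  rw [hexp, hcos]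
  ring

lemma abs_num_cpow (τ : ℝ) (hτ : τ ≠ 0) :
    ‖(Complex.I * (τ : ℂ)) ^ ((4 : ℂ) / 3)‖ = |τ| ^ ((4 : ℝ) / 3) := by
  have hz : (Complex.I * (τ : ℂ)) ≠ 0 := by
    simp [Complex.I_ne_zero, hτ]
  rw [Complex.norm_cpow_of_ne_zero hz]
  simp

/-- Multiplier bound for the inverse boundary operator: with `λ_k = (kπ/B)²`,
`σ_k = a − λ_k` and `C_Γ = Γ(4/3)/Γ(2/3)`, there exists `C > 0` such that for every `k ≥ 1`
with `λ_k ≥ 2|a|` and every nonzero real `τ`, the multiplier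
`M(k,τ) = (iτ)^{4/3} / ((iτ)^{2/3} − C_Γ σ_k)` satisfies
`|M(k,τ)| ≤ C |τ|^{4/3} / (|τ|^{2/3} + k²)`. -/
theorem multiplier_bound (B a : ℝ) (hB : 0 < B) :
    ∃ C > 0, ∀ k : ℕ, 1 ≤ k → 2 * |a| ≤ ((k : ℝ) * Real.pi / B) ^ 2 → ∀ τ : ℝ, τ ≠ 0 →
      ‖(Complex.I * (τ : ℂ)) ^ ((4 : ℂ) / 3) /
          ((Complex.I * (τ : ℂ)) ^ ((2 : ℂ) / 3) -
            ((Real.Gamma (4 / 3) / Real.Gamma (2 / 3) *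
              (a - ((k : ℝ) * Real.pi / B) ^ 2) : ℝ) : ℂ))‖ ≤
        C * |τ| ^ ((4 : ℝ) / 3) / (|τ| ^ ((2 : ℝ) / 3) + (k : ℝ) ^ 2) := by
  have hπ := Real.pi_pos
  have hCg : 0 < Real.Gamma (4 / 3) / Real.Gamma (2 / 3) :=
    div_pos (Real.Gamma_pos_of_pos (by norm_num)) (Real.Gamma_pos_of_pos (by norm_num))
  set Cg := Real.Gamma (4 / 3) / Real.Gamma (2 / 3) with hCgdef
  set c : ℝ := min (1 / 2) (Cg * Real.pi ^ 2 / (2 * B ^ 2)) with hcdef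
  have hc : 0 < c := lt_min (by norm_num) (by positivity)
  refine ⟨c⁻¹, inv_pos.mpr hc, ?_⟩
  intro k hk hka τ hτ
  set lk := ((k : ℝ) * Real.pi / B) ^ 2 with hlk
  set S := |τ| ^ ((2:ℝ)/3) + (k : ℝ) ^ 2 with hS
  have hS0 : 0 < S := by positivity
  set D := (Complex.I * (τ : ℂ)) ^ ((2 : ℂ) / 3) - ((Cg * (a - lk) : ℝ) : ℂ) with hD
  have hre : D.re = |τ| ^ ((2:ℝ)/3) / 2 + Cg * (lk - a) := by
    rw [hD, Complex.sub_re, Complex.ofReal_re, re_den_cpow τ hτ]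
    ring
  have hkey : c * S ≤ D.re := by
    rw [hre]
    have h1 : c * (|τ| ^ ((2:ℝ)/3)) ≤ |τ| ^ ((2:ℝ)/3) / 2 := by
      have hm := min_le_left (1/2) (Cg * Real.pi ^ 2 / (2 * B ^ 2))
      nlinarith [Real.rpow_nonneg (abs_nonneg τ) ((2:ℝ)/3)]
    have h2 : c * (k:ℝ)^2 ≤ Cg * (lk - a) := by
      have hmin := min_le_right (1/2) (Cg * Real.pi ^ 2 / (2 * B ^ 2))
      have halk : a ≤ lk / 2 := by
        have := le_abs_self a; linarith
      have hstep : c * (k:ℝ)^2 ≤ Cg * Real.pi^2 / (2 * B^2) * (k:ℝ)^2 := by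
        nlinarith [sq_nonneg (k:ℝ)]
      have hlkeq : lk = (k:ℝ)^2 * Real.pi^2 / B^2 := by
        rw [hlk]; field_simp
      calc c * (k:ℝ)^2 ≤ Cg * Real.pi^2 / (2*B^2) * (k:ℝ)^2 := hstep
        _ = Cg * (lk/2) := by rw [hlkeq]; field_simp
        _ ≤ Cg * (lk - a) := by nlinarith
    rw [hS]; nlinarith
  have hDabs : c * S ≤ ‖D‖ :=
    hkey.trans ((le_abs_self _).trans (Complex.abs_re_le_norm D))
  rw [norm_div, abs_num_cpow τ hτ]
  calc |τ| ^ ((4:ℝ)/3) / ‖D‖ ≤ |τ| ^ ((4:ℝ)/3) / (c * S) := by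
        gcongr
    _ = c⁻¹ * |τ| ^ ((4:ℝ)/3) / S := by
        field_simp
end

section
/- Let B > 0 and a ∈ ℝ with a ≤ (π/B)², set λ_k = (kπ/B)² (so λ_k ≥ a for all k ≥ 1) and C_Γ = Γ(4/3)/Γ(2/3). For each k ≥ 1 let A_k : ℝ → ℂ be measurable and define F_k(τ) = (iτ)^{4/3} · ((iτ)^{2/3} + C_Γ(λ_k − a))^{−1} · A_k(τ) for τ ≠ 0 (principal-branch powers). Then ∑_{k≥1} k² ∫_ℝ (1 + |τ|)^{−2/3} |F_k(τ)|² dτ ≤ 4 ∑_{k≥1} k² ∫_ℝ (1 + |τ|)^{2/3} |A_k(τ)|² dτ. In particular, if the right-hand side is finite (i.e., the boundary data lies in H^{1/3}_t L²_y), then the left-hand side is finite (i.e., the forcing lies in H^{−1/3}_t L²_y). -/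
open MeasureTheory Complex Real ENNReal

/-- The forcing multiplier applied to the `k`-th boundary coefficient:
`F_k(τ) = (iτ)^{4/3} ((iτ)^{2/3} + C_Γ(λ_k − a))⁻¹ A_k(τ)` with `λ_k = (kπ/B)²` and
`C_Γ = Γ(4/3)/Γ(2/3)`. -/
noncomputable def forcingMode (B a : ℝ) (A : ℕ → ℝ → ℂ) (k : ℕ) (τ : ℝ) : ℂ :=
  (Complex.I * (τ : ℂ)) ^ ((4 : ℂ) / 3) *
    ((Complex.I * (τ : ℂ)) ^ ((2 : ℂ) / 3) +
      ((Real.Gamma (4 / 3) / Real.Gamma (2 / 3) *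
        (((k : ℝ) * Real.pi / B) ^ 2 - a) : ℝ) : ℂ))⁻¹ * A k τ

lemma re_cpow_two_thirds (τ : ℝ) (hτ : τ ≠ 0) :
    ((Complex.I * (τ : ℂ)) ^ ((2 : ℂ) / 3)).re = |τ| ^ ((2 : ℝ)/3) / 2 := by
  have hz : (Complex.I * (τ : ℂ)) ≠ 0 := by
    simp [Complex.ext_iff, hτ]
  have habs : ‖(Complex.I * (τ : ℂ))‖ = |τ| := by
    rw [norm_mul, Complex.norm_I, Complex.norm_real, one_mul, Real.norm_eq_abs]
  have harg : Real.cos ((Complex.I * (τ : ℂ)).arg * (2/3)) = 1/2 := by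
    have hre : (Complex.I * (τ : ℂ)).re = 0 := by simp
    have him : (Complex.I * (τ : ℂ)).im = τ := by simp
    rcases lt_or_gt_of_ne hτ with h | h
    · have : (Complex.I * (τ : ℂ)).arg = -(Real.pi/2) :=
        Complex.arg_eq_neg_pi_div_two_iff.mpr ⟨hre, by rw [him]; exact h⟩
      rw [this, show -(Real.pi/2) * (2/3) = -(Real.pi/3) by ring, Real.cos_neg,
        Real.cos_pi_div_three]
    · have : (Complex.I * (τ : ℂ)).arg = Real.pi/2 :=
        Complex.arg_eq_pi_div_two_iff.mpr ⟨hre, by rw [him]; exact h⟩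
      rw [this, show Real.pi/2 * (2/3) = Real.pi/3 by ring, Real.cos_pi_div_three]
  rw [Complex.cpow_def_of_ne_zero hz, Complex.exp_re]
  have h1 : (Complex.log (Complex.I * (τ : ℂ)) * ((2:ℂ)/3)).re
      = Real.log |τ| * (2/3) := by
    rw [Complex.mul_re, Complex.log_re, habs]
    simp [Complex.log_im]

  have h2 : (Complex.log (Complex.I * (τ : ℂ)) * ((2:ℂ)/3)).im
      = (Complex.I * (τ : ℂ)).arg * (2/3) := by
    rw [Complex.mul_im, Complex.log_im]
    simp

  rw [h1, h2, harg]
  rw [Real.rpow_def_of_pos (abs_pos.mpr hτ)]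
  ring_nf

lemma mult_bound (c : ℝ) (hc : 0 ≤ c) (τ : ℝ) :
    ‖(Complex.I * (τ : ℂ)) ^ ((4 : ℂ) / 3) *
      ((Complex.I * (τ : ℂ)) ^ ((2 : ℂ) / 3) + (c : ℂ))⁻¹‖ ≤
      2 * (1 + |τ|) ^ ((2 : ℝ)/3) := by
  rcases eq_or_ne τ 0 with rfl | hτ
  · rw [show (Complex.I * ((0:ℝ) : ℂ)) = 0 by simp, Complex.zero_cpow (by norm_num)]
    simp
  · have hz : (Complex.I * (τ : ℂ)) ≠ 0 := by simp [Complex.ext_iff, hτ]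
    have habs : ‖(Complex.I * (τ : ℂ))‖ = |τ| := by
      rw [norm_mul, Complex.norm_I, Complex.norm_real, one_mul, Real.norm_eq_abs]
    have hτ0 : (0:ℝ) < |τ| := abs_pos.mpr hτ
    have hnum : ‖(Complex.I * (τ : ℂ)) ^ ((4 : ℂ) / 3)‖ = |τ| ^ ((4:ℝ)/3) := by
      rw [Complex.norm_cpow_of_ne_zero hz]
      simp [habs]
    set d : ℂ := (Complex.I * (τ : ℂ)) ^ ((2 : ℂ) / 3) + (c : ℂ) with hd
    have hdre : d.re = |τ| ^ ((2:ℝ)/3) / 2 + c := by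
      rw [hd, Complex.add_re, Complex.ofReal_re, re_cpow_two_thirds τ hτ]
    have hdlb : |τ| ^ ((2:ℝ)/3) / 2 ≤ ‖d‖ := by
      calc |τ| ^ ((2:ℝ)/3) / 2 ≤ d.re := by rw [hdre]; linarith
        _ ≤ ‖d‖ := Complex.re_le_norm d
    have hdpos : (0:ℝ) < |τ| ^ ((2:ℝ)/3) / 2 := by positivity
    have hinv : ‖d⁻¹‖ ≤ (|τ| ^ ((2:ℝ)/3) / 2)⁻¹ := by
      rw [norm_inv]
      exact inv_anti₀ hdpos hdlb
    calc ‖(Complex.I * (τ : ℂ)) ^ ((4 : ℂ) / 3) * d⁻¹‖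
        = |τ| ^ ((4:ℝ)/3) * ‖d⁻¹‖ := by rw [norm_mul, hnum]
      _ ≤ |τ| ^ ((4:ℝ)/3) * (|τ| ^ ((2:ℝ)/3) / 2)⁻¹ := by
          exact mul_le_mul_of_nonneg_left hinv (by positivity)
      _ = 2 * |τ| ^ ((2:ℝ)/3) := by
          rw [show (4:ℝ)/3 = 2/3 + 2/3 by norm_num, Real.rpow_add hτ0]
          field_simp
      _ ≤ 2 * (1 + |τ|) ^ ((2:ℝ)/3) := by
          have := Real.rpow_le_rpow (abs_nonneg τ) (by linarith : |τ| ≤ 1 + |τ|)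
            (by norm_num : (0:ℝ) ≤ 2/3)
          linarith

lemma pt_bound (τ : ℝ) (F Av : ℂ) (h : ‖F‖ ≤ 2 * (1 + |τ|) ^ ((2 : ℝ)/3) * ‖Av‖) :
    ENNReal.ofReal ((1 + |τ|) ^ (-(2 : ℝ) / 3)) * (‖F‖₊ : ℝ≥0∞) ^ 2 ≤
      4 * (ENNReal.ofReal ((1 + |τ|) ^ ((2 : ℝ) / 3)) * (‖Av‖₊ : ℝ≥0∞) ^ 2) := by
  have ht0 : (0:ℝ) < 1 + |τ| := by positivity
  set u : ℝ := (1 + |τ|) ^ ((2 : ℝ)/3) with hu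
  set v : ℝ := (1 + |τ|) ^ (-(2 : ℝ)/3) with hv
  have hu0 : 0 ≤ u := by positivity
  have hv0 : 0 ≤ v := by positivity
  have huv : v * u = 1 := by
    rw [hu, hv, ← Real.rpow_add ht0]
    norm_num
  have key : v * ‖F‖ ^ 2 ≤ 4 * (u * ‖Av‖ ^ 2) := by
    have hsq : ‖F‖ ^ 2 ≤ (2 * u * ‖Av‖) ^ 2 :=
      pow_le_pow_left₀ (norm_nonneg _) h 2
    calc v * ‖F‖ ^ 2 ≤ v * (2 * u * ‖Av‖) ^ 2 := mul_le_mul_of_nonneg_left hsq hv0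
      _ = 4 * ((v * u) * (u * ‖Av‖ ^ 2)) := by ring
      _ = 4 * (u * ‖Av‖ ^ 2) := by rw [huv, one_mul]
  calc ENNReal.ofReal v * (‖F‖₊ : ℝ≥0∞) ^ 2
      = ENNReal.ofReal (v * ‖F‖ ^ 2) := by
        rw [← enorm_eq_nnnorm, ← ofReal_norm, ← ENNReal.ofReal_pow (norm_nonneg _),
          ← ENNReal.ofReal_mul hv0]
    _ ≤ ENNReal.ofReal (4 * (u * ‖Av‖ ^ 2)) := ENNReal.ofReal_le_ofReal key
    _ = 4 * (ENNReal.ofReal u * (‖Av‖₊ : ℝ≥0∞) ^ 2) := by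
        rw [ENNReal.ofReal_mul (by norm_num), ENNReal.ofReal_mul hu0,
          ← enorm_eq_nnnorm, ← ofReal_norm, ← ENNReal.ofReal_pow (norm_nonneg _)]
        norm_num

/-- If the boundary data lies in `H^{1/3}_t L²_y`, then the forcing lies in
`H^{−1/3}_t L²_y`: with `λ_k = (kπ/B)² ≥ a` and `F_k` as above,
`∑_{k≥1} k² ∫ ⟨τ⟩^{−2/3} |F_k(τ)|² dτ ≤ 4 ∑_{k≥1} k² ∫ ⟨τ⟩^{2/3} |A_k(τ)|² dτ`;
in particular finiteness of the right-hand side forces finiteness of the left-hand side. -/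
theorem forcing_regularity (B a : ℝ) (hB : 0 < B) (ha : a ≤ (Real.pi / B) ^ 2)
    (A : ℕ → ℝ → ℂ) (hA : ∀ k, Measurable (A k)) :
    (∑' k : ℕ+, ((k : ℝ≥0∞) ^ 2 *
        ∫⁻ τ : ℝ, ENNReal.ofReal ((1 + |τ|) ^ (-(2 : ℝ) / 3)) *
          (‖forcingMode B a A k τ‖₊ : ℝ≥0∞) ^ 2)) ≤
      4 * ∑' k : ℕ+, ((k : ℝ≥0∞) ^ 2 *
        ∫⁻ τ : ℝ, ENNReal.ofReal ((1 + |τ|) ^ ((2 : ℝ) / 3)) *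
          (‖A k τ‖₊ : ℝ≥0∞) ^ 2) ∧
    ((∑' k : ℕ+, ((k : ℝ≥0∞) ^ 2 *
        ∫⁻ τ : ℝ, ENNReal.ofReal ((1 + |τ|) ^ ((2 : ℝ) / 3)) *
          (‖A k τ‖₊ : ℝ≥0∞) ^ 2)) ≠ ⊤ →
      (∑' k : ℕ+, ((k : ℝ≥0∞) ^ 2 *
        ∫⁻ τ : ℝ, ENNReal.ofReal ((1 + |τ|) ^ (-(2 : ℝ) / 3)) *
          (‖forcingMode B a A k τ‖₊ : ℝ≥0∞) ^ 2)) ≠ ⊤) := by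
  have main : (∑' k : ℕ+, ((k : ℝ≥0∞) ^ 2 *
        ∫⁻ τ : ℝ, ENNReal.ofReal ((1 + |τ|) ^ (-(2 : ℝ) / 3)) *
          (‖forcingMode B a A k τ‖₊ : ℝ≥0∞) ^ 2)) ≤
      4 * ∑' k : ℕ+, ((k : ℝ≥0∞) ^ 2 *
        ∫⁻ τ : ℝ, ENNReal.ofReal ((1 + |τ|) ^ ((2 : ℝ) / 3)) *
          (‖A k τ‖₊ : ℝ≥0∞) ^ 2) := by
    rw [← ENNReal.tsum_mul_left]
    apply ENNReal.tsum_le_tsum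
    intro k
    calc (k : ℝ≥0∞) ^ 2 * ∫⁻ τ : ℝ, ENNReal.ofReal ((1 + |τ|) ^ (-(2 : ℝ) / 3)) *
          (‖forcingMode B a A k τ‖₊ : ℝ≥0∞) ^ 2
        ≤ (k : ℝ≥0∞) ^ 2 * ∫⁻ τ : ℝ, 4 * (ENNReal.ofReal ((1 + |τ|) ^ ((2 : ℝ) / 3)) *
          (‖A k τ‖₊ : ℝ≥0∞) ^ 2) := by
          apply mul_le_mul_right
          apply MeasureTheory.lintegral_mono
          intro τ
          have hc : 0 ≤ Real.Gamma (4 / 3) / Real.Gamma (2 / 3) *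
              (((k : ℝ) * Real.pi / B) ^ 2 - a) := by
            have hg : 0 < Real.Gamma (4 / 3) / Real.Gamma (2 / 3) :=
              div_pos (Real.Gamma_pos_of_pos (by norm_num))
                (Real.Gamma_pos_of_pos (by norm_num))
            have hk1 : (1:ℝ) ≤ (k : ℝ) := by exact_mod_cast k.one_le
            have hpb : 0 < Real.pi / B := div_pos Real.pi_pos hB
            have h2 : (Real.pi / B) ^ 2 ≤ ((k : ℝ) * Real.pi / B) ^ 2 := by
              rw [mul_div_assoc]
              apply pow_le_pow_left₀ hpb.le
              nlinarith
            exact mul_nonneg hg.le (by linarith)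
          have hF : ‖forcingMode B a A k τ‖ ≤ 2 * (1 + |τ|) ^ ((2 : ℝ)/3) * ‖A k τ‖ := by
            unfold forcingMode
            rw [norm_mul]
            exact mul_le_mul_of_nonneg_right (mult_bound _ hc τ) (norm_nonneg _)
          exact pt_bound τ _ _ hF
      _ = 4 * ((k : ℝ≥0∞) ^ 2 * ∫⁻ τ : ℝ, ENNReal.ofReal ((1 + |τ|) ^ ((2 : ℝ) / 3)) *
          (‖A k τ‖₊ : ℝ≥0∞) ^ 2) := by
          rw [MeasureTheory.lintegral_const_mul' _ _ (by norm_num : (4:ℝ≥0∞) ≠ ⊤)]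
          ring
  refine ⟨main, fun hfin => ?_⟩
  exact ne_top_of_le_ne_top (ENNReal.mul_ne_top (by norm_num) hfin) main
end
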